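/- Characterization of the curve P_λ: Let λ, a ∈ ℂ with λ ≠ 0 and a ≠ 0. The Hénon map H_{c,a} has a fixed point (x, y) at which the derivative matrix DH_{c,a}(x,y) = [[2x, a], [a, 0]] has λ as an eigenvalue if and only if c = (1 − a²)(λ/2 − a²/(2λ)) − (λ/2 − a²/(2λ))². Moreover, in that case the point q_a = (λ/2 − a²/(2λ), a·(λ/2 − a²/(2λ))) is such a fixed point, and the eigenvalues of the derivative at q_a are λ and μ = −a²/λ. -/

import Mathlib

open Metric Filter Topology Set

noncomputable section

/-- The complex Hénon map `H_{c,a}(x,y) = (x² + c + a y, a x)`. -/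
def henon (c a : ℂ) : ℂ × ℂ → ℂ × ℂ := fun P => (P.1 ^ 2 + c + a * P.2, a * P.1)

/-- The derivative matrix of the Hénon map at a point `(x, y)`. -/
def henonDeriv (a : ℂ) (P : ℂ × ℂ) : Matrix (Fin 2) (Fin 2) ℂ := !![2 * P.1, a; a, 0]

/-- **Characterization of the curve `P_λ`.** For `λ ≠ 0`, `a ≠ 0`, the Hénon map `H_{c,a}` has
a fixed point at which the derivative has eigenvalue `λ` iff
`c = (1 - a²)(λ/2 - a²/(2λ)) - (λ/2 - a²/(2λ))²`; in that case
`q_a = (λ/2 - a²/(2λ), a(λ/2 - a²/(2λ)))` is such a fixed point with eigenvalues `λ` and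
`μ = -a²/λ`. -/

lemma mem_spectrum_henonDeriv_iff (a μ : ℂ) (P : ℂ × ℂ) :
    μ ∈ spectrum ℂ (henonDeriv a P) ↔ (μ - 2 * P.1) * μ - a * a = 0 := by
  rw [spectrum.mem_iff, ← not_iff_not, not_not, Matrix.isUnit_iff_isUnit_det,
    isUnit_iff_ne_zero]
  have h : (algebraMap ℂ (Matrix (Fin 2) (Fin 2) ℂ) μ - henonDeriv a P).det
      = (μ - 2 * P.1) * μ - a * a := by
    simp [Matrix.algebraMap_eq_diagonal, henonDeriv, Matrix.det_fin_two,
      Matrix.diagonal_apply]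
  rw [h]

theorem curve_P_lambda (lam a c : ℂ) (hlam : lam ≠ 0) (ha : a ≠ 0) :
    ((∃ P : ℂ × ℂ, henon c a P = P ∧ lam ∈ spectrum ℂ (henonDeriv a P)) ↔
      c = (1 - a ^ 2) * (lam / 2 - a ^ 2 / (2 * lam)) - (lam / 2 - a ^ 2 / (2 * lam)) ^ 2) ∧
    (c = (1 - a ^ 2) * (lam / 2 - a ^ 2 / (2 * lam)) - (lam / 2 - a ^ 2 / (2 * lam)) ^ 2 →
      henon c a (lam / 2 - a ^ 2 / (2 * lam), a * (lam / 2 - a ^ 2 / (2 * lam))) =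
        (lam / 2 - a ^ 2 / (2 * lam), a * (lam / 2 - a ^ 2 / (2 * lam))) ∧
      lam ∈ spectrum ℂ (henonDeriv a (lam / 2 - a ^ 2 / (2 * lam),
        a * (lam / 2 - a ^ 2 / (2 * lam)))) ∧
      (-a ^ 2 / lam) ∈ spectrum ℂ (henonDeriv a (lam / 2 - a ^ 2 / (2 * lam),
        a * (lam / 2 - a ^ 2 / (2 * lam))))) := by
  set x0 : ℂ := lam / 2 - a ^ 2 / (2 * lam) with hx0
  have hfixq : ∀ c' : ℂ, c' = (1 - a ^ 2) * x0 - x0 ^ 2 →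
      henon c' a (x0, a * x0) = (x0, a * x0) := by
    intro c' hc
    rw [Prod.ext_iff]
    refine ⟨?_, rfl⟩
    show x0 ^ 2 + c' + a * (a * x0) = x0
    rw [hc]; ring
  have hspecq : lam ∈ spectrum ℂ (henonDeriv a (x0, a * x0)) := by
    rw [mem_spectrum_henonDeriv_iff]
    show (lam - 2 * x0) * lam - a * a = 0
    rw [hx0]; field_simp; ring
  have hspecq2 : (-a ^ 2 / lam) ∈ spectrum ℂ (henonDeriv a (x0, a * x0)) := by
    rw [mem_spectrum_henonDeriv_iff]
    show (-a ^ 2 / lam - 2 * x0) * (-a ^ 2 / lam) - a * a = 0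
    rw [hx0]; field_simp; ring_nf
  constructor
  · constructor
    · rintro ⟨P, hfix, hspec⟩
      rw [mem_spectrum_henonDeriv_iff] at hspec
      have hfix1 : P.1 ^ 2 + c + a * P.2 = P.1 := congrArg Prod.fst hfix
      have hfix2 : a * P.1 = P.2 := congrArg Prod.snd hfix
      have hc1 : c = P.1 - a ^ 2 * P.1 - P.1 ^ 2 := by
        linear_combination hfix1 + a * hfix2
      have hx : P.1 = x0 := by
        rw [hx0]; field_simp
        linear_combination -hspec
      rw [hc1, hx]; ring
    · intro hc
      exact ⟨(x0, a * x0), hfixq c hc, hspecq⟩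
  · intro hc
    exact ⟨hfixq c hc, hspecq, hspecq2⟩
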